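/- Let n ≥ 1 and let W_n be the n-uplinked mutual dyad. Then the dimension-2 path homology of W_n over any field F has dimension n − 1; that is, β̃_2(W_n) = n − 1. -/

import Mathlib

open Finset

/-- The non-regular boundary operator `∂_[p] : R^{V^{p+1}} → R^{V^p}`.
It is the linear map acting on the standard basis by
`∂_[p] e_{(v_0,…,v_p)} = ∑_{j=0}^p (−1)^j e_{(v_0,…,v̂_j,…,v_p)}`,
where `v̂_j` means that the entry `v_j` is omitted from the tuple
(here `fun i => x (j.succAbove i)` is the tuple `x` with its `j`-th entry dropped). -/
noncomputable def pathBoundary (R V : Type) [CommRing R] [Fintype V] [DecidableEq V]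
    (p : ℕ) : ((Fin (p + 1) → V) → R) →ₗ[R] ((Fin p → V) → R) where
  toFun f := fun w => ∑ x : Fin (p + 1) → V,
    (∑ j : Fin (p + 1), (-1 : R) ^ (j : ℕ) *
      (if (fun i => x (j.succAbove i)) = w then 1 else 0)) * f x
  map_add' f g := by
    funext w
    simp [mul_add, Finset.sum_add_distrib]
  map_smul' r f := by
    funext w
    simp [Finset.mul_sum, mul_left_comm]

/-- A tuple of vertices is an allowed path when each consecutive pair is an arc. -/
def IsAllowed {V : Type} (A : V → V → Prop) {q : ℕ} (x : Fin q → V) : Prop :=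
  ∀ (i : ℕ) (h : i + 1 < q), A (x ⟨i, Nat.lt_of_succ_lt h⟩) (x ⟨i + 1, h⟩)

/-- `R^{𝒜}`: the subspace of `R^{V^q}` of functions supported on allowed paths
(`q` is the number of vertices in the tuple, so this is `R^{𝒜_{q-1}}`). -/
def allowedSubmodule (R V : Type) [CommRing R] (A : V → V → Prop) (q : ℕ) :
    Submodule R ((Fin q → V) → R) where
  carrier := {f | ∀ x, ¬ IsAllowed A x → f x = 0}
  add_mem' := fun hf hg x hx => by simp only [Pi.add_apply, hf x hx, hg x hx, add_zero]
  zero_mem' := fun x hx => rfl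
  smul_mem' := fun c f hf x hx => by simp only [Pi.smul_apply, hf x hx, smul_zero]

/-- `Ω_p`, the space of invariant `p`-paths:
`Ω_p = {ω ∈ R^{𝒜_p} : ∂_[p] ω ∈ R^{𝒜_{p−1}}}`. -/
noncomputable def invariantPaths (R V : Type) [CommRing R] [Fintype V] [DecidableEq V]
    (A : V → V → Prop) (p : ℕ) : Submodule R ((Fin (p + 1) → V) → R) :=
  allowedSubmodule R V A (p + 1) ⊓ (allowedSubmodule R V A p).comap (pathBoundary R V p)

/-- The cycles `Z_p = ker ∂_p` of the path complex `(Ω_p, ∂_p)`, `∂_p = ∂_[p]|_{Ω_p}`.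
In degree `0` the complex ends at `Ω_0` (the differential out of `Ω_0` is zero),
so `Z_0 = Ω_0`. -/
noncomputable def pathCycles (R V : Type) [CommRing R] [Fintype V] [DecidableEq V]
    (A : V → V → Prop) : (p : ℕ) → Submodule R ((Fin (p + 1) → V) → R)
  | 0 => invariantPaths R V A 0
  | p + 1 => invariantPaths R V A (p + 1) ⊓ LinearMap.ker (pathBoundary R V (p + 1))

/-- The boundaries `B_p = im ∂_{p+1} = ∂_[p+1](Ω_{p+1})`. -/
noncomputable def pathBoundaries (R V : Type) [CommRing R] [Fintype V] [DecidableEq V]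
    (A : V → V → Prop) (p : ℕ) : Submodule R ((Fin (p + 1) → V) → R) :=
  Submodule.map (pathBoundary R V (p + 1)) (invariantPaths R V A (p + 1))

/-- The path homology `H_p = Z_p / B_p` of the digraph `(V, A)` with coefficients in `R`. -/
abbrev pathHomology (R V : Type) [CommRing R] [Fintype V] [DecidableEq V]
    (A : V → V → Prop) (p : ℕ) : Type :=
  pathCycles R V A p ⧸ (pathBoundaries R V A p).comap (pathCycles R V A p).subtype

/-- The Betti numbers `β_p = dim H_p`. -/
noncomputable def betti (F V : Type) [Field F] [Fintype V] [DecidableEq V]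
    (A : V → V → Prop) (p : ℕ) : ℕ :=
  Module.finrank F (pathHomology F V A p)

/-- The reduced Betti numbers `β̃_p = β_p − δ_{p0}` (as integers). -/
noncomputable def tildeBetti (F V : Type) [Field F] [Fintype V] [DecidableEq V]
    (A : V → V → Prop) (p : ℕ) : ℤ :=
  (betti F V A p : ℤ) - (if p = 0 then 1 else 0)

/-- For `n ≥ 1`, the `n`-uplinked mutual dyad `W_n` has vertex set `{a, b, 1, …, n}`
(realized as `Fin 2 ⊕ Fin n`, with `a = Sum.inl 0` and `b = Sum.inl 1`) and arc set
`{(a,b), (b,a)} ∪ {(a,i) : 1 ≤ i ≤ n} ∪ {(b,i) : 1 ≤ i ≤ n}`. -/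
def uplinkArc (n : ℕ) : (Fin 2 ⊕ Fin n) → (Fin 2 ⊕ Fin n) → Prop
  | Sum.inl i, Sum.inl j => i ≠ j
  | Sum.inl _, Sum.inr _ => True
  | Sum.inr _, _ => False

/-- The `n`-downlinked mutual dyad: the `n`-uplinked mutual dyad with all arcs reversed. -/
def downlinkArc (n : ℕ) (u v : Fin 2 ⊕ Fin n) : Prop := uplinkArc n v u


open Finset

section Helpers

lemma boundary_apply (R V : Type) [CommRing R] [Fintype V] [DecidableEq V] (p : ℕ)
    (f : (Fin (p + 1) → V) → R) (w : Fin p → V) :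
    pathBoundary R V p f w =
      ∑ j : Fin (p + 1), (-1 : R) ^ (j : ℕ) * ∑ v : V, f (j.insertNth v w) := by
  have h0 : pathBoundary R V p f w = ∑ x : Fin (p + 1) → V,
      (∑ j : Fin (p + 1), (-1 : R) ^ (j : ℕ) *
        (if (fun i => x (j.succAbove i)) = w then 1 else 0)) * f x := rfl
  rw [h0]
  simp_rw [Finset.sum_mul, mul_assoc, ite_mul, one_mul, zero_mul]
  rw [Finset.sum_comm]
  refine Finset.sum_congr rfl fun j _ => ?_
  rw [← Finset.mul_sum]
  congr 1
  rw [← (Fin.insertNthEquiv (fun _ => V) j).sum_comp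
    (fun x => if (fun i => x (j.succAbove i)) = w then f x else 0)]
  simp [Fin.insertNthEquiv, Fintype.sum_prod_type, Fin.insertNth_apply_succAbove,
    Finset.sum_ite_eq']

lemma boundary_single (R V : Type) [CommRing R] [Fintype V] [DecidableEq V] (p : ℕ)
    (x0 : Fin (p + 1) → V) (c : R) (w : Fin p → V) :
    pathBoundary R V p (Pi.single x0 c) w =
      (∑ j : Fin (p + 1), (-1 : R) ^ (j : ℕ) *
        (if w = (fun i => x0 (j.succAbove i)) then 1 else 0)) * c := by
  have h0 : pathBoundary R V p (Pi.single x0 c) w = ∑ x : Fin (p + 1) → V,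
      (∑ j : Fin (p + 1), (-1 : R) ^ (j : ℕ) *
        (if (fun i => x (j.succAbove i)) = w then 1 else 0)) *
        (Pi.single x0 c : (Fin (p + 1) → V) → R) x := rfl
  rw [h0, Finset.sum_eq_single x0]
  · rw [Pi.single_eq_same]
    refine congrArg (· * c) (Finset.sum_congr rfl fun j _ => ?_)
    exact congrArg _ (if_congr eq_comm rfl rfl)
  · intro x _ hx
    rw [Pi.single_eq_of_ne hx, mul_zero]
  · intro h; exact absurd (Finset.mem_univ x0) h

lemma isAllowed_two_iff {V : Type} {A : V → V → Prop} {x : Fin 2 → V} :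
    IsAllowed A x ↔ A (x 0) (x 1) := by
  constructor
  · intro h; exact h 0 one_lt_two
  · intro h i hi
    have hi0 : i = 0 := by omega
    subst hi0; exact h

lemma isAllowed_three_iff {V : Type} {A : V → V → Prop} {x : Fin 3 → V} :
    IsAllowed A x ↔ A (x 0) (x 1) ∧ A (x 1) (x 2) := by
  constructor
  · intro h; exact ⟨h 0 (by omega), h 1 (by omega)⟩
  · rintro ⟨h1, h2⟩ i hi
    have : i = 0 ∨ i = 1 := by omega
    rcases this with rfl | rfl
    · exact h1
    · exact h2

lemma isAllowed_four_iff {V : Type} {A : V → V → Prop} {x : Fin 4 → V} :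
    IsAllowed A x ↔ A (x 0) (x 1) ∧ A (x 1) (x 2) ∧ A (x 2) (x 3) := by
  constructor
  · intro h; exact ⟨h 0 (by omega), h 1 (by omega), h 2 (by omega)⟩
  · rintro ⟨h1, h2, h3⟩ i hi
    have : i = 0 ∨ i = 1 ∨ i = 2 := by omega
    rcases this with rfl | rfl | rfl
    · exact h1
    · exact h2
    · exact h3

lemma fin2_fun_eq {α : Type} {x y : Fin 2 → α} : x = y ↔ x 0 = y 0 ∧ x 1 = y 1 := by
  constructor
  · rintro rfl; exact ⟨rfl, rfl⟩
  · rintro ⟨h0, h1⟩; funext i; fin_cases i <;> assumption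

lemma fin3_fun_eq {α : Type} {x y : Fin 3 → α} :
    x = y ↔ x 0 = y 0 ∧ x 1 = y 1 ∧ x 2 = y 2 := by
  constructor
  · rintro rfl; exact ⟨rfl, rfl, rfl⟩
  · rintro ⟨h0, h1, h2⟩; funext i; fin_cases i <;> assumption

lemma fin4_fun_eq {α : Type} {x y : Fin 4 → α} :
    x = y ↔ x 0 = y 0 ∧ x 1 = y 1 ∧ x 2 = y 2 ∧ x 3 = y 3 := by
  constructor
  · rintro rfl; exact ⟨rfl, rfl, rfl, rfl⟩
  · rintro ⟨h0, h1, h2, h3⟩; funext i; fin_cases i <;> assumption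

@[simp] lemma cval2 {α : Type} (x y z : α) : ![x, y, z] 2 = z := rfl
@[simp] lemma cval2' {α : Type} (x y z t : α) : ![x, y, z, t] 2 = z := rfl
@[simp] lemma cval3' {α : Type} (x y z t : α) : ![x, y, z, t] 3 = t := rfl

-- specialized insertNth computations
lemma ins0₂ {α : Type} (v p q : α) : (0 : Fin 3).insertNth v ![p, q] = ![v, p, q] := by
  funext i; fin_cases i <;> rfl
lemma ins1₂ {α : Type} (v p q : α) : (1 : Fin 3).insertNth v ![p, q] = ![p, v, q] := by
  funext i; fin_cases i <;> rfl
lemma ins2₂ {α : Type} (v p q : α) : (2 : Fin 3).insertNth v ![p, q] = ![p, q, v] := by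
  funext i; fin_cases i <;> rfl
lemma ins0₃ {α : Type} (v p q r : α) : (0 : Fin 4).insertNth v ![p, q, r] = ![v, p, q, r] := by
  funext i; fin_cases i <;> rfl
lemma ins1₃ {α : Type} (v p q r : α) : (1 : Fin 4).insertNth v ![p, q, r] = ![p, v, q, r] := by
  funext i; fin_cases i <;> rfl
lemma ins2₃ {α : Type} (v p q r : α) : (2 : Fin 4).insertNth v ![p, q, r] = ![p, q, v, r] := by
  funext i; fin_cases i <;> rfl
lemma ins3₃ {α : Type} (v p q r : α) : (3 : Fin 4).insertNth v ![p, q, r] = ![p, q, r, v] := by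
  funext i; fin_cases i <;> rfl

-- drop computations for 3-tuples
lemma drop0₃ {α : Type} (x y z : α) :
    (fun i => (![x, y, z] : Fin 3 → α) ((0 : Fin 3).succAbove i)) = ![y, z] := by
  funext i; fin_cases i <;> rfl
lemma drop1₃ {α : Type} (x y z : α) :
    (fun i => (![x, y, z] : Fin 3 → α) ((1 : Fin 3).succAbove i)) = ![x, z] := by
  funext i; fin_cases i <;> rfl
lemma drop2₃ {α : Type} (x y z : α) :
    (fun i => (![x, y, z] : Fin 3 → α) ((2 : Fin 3).succAbove i)) = ![x, y] := by
  funext i; fin_cases i <;> rfl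

lemma sum_V {n : ℕ} {M : Type} [AddCommMonoid M] (g : Fin 2 ⊕ Fin n → M) :
    ∑ v, g v = g (Sum.inl 0) + g (Sum.inl 1) + ∑ k : Fin n, g (Sum.inr k) := by
  rw [Fintype.sum_sum_type, Fin.sum_univ_two]

lemma sum_V_eq_single {n : ℕ} {M : Type} [AddCommMonoid M] (c d : Fin 2) (hcd : c ≠ d)
    (g : Fin 2 ⊕ Fin n → M) (h1 : g (Sum.inl c) = 0) (h2 : ∀ k, g (Sum.inr k) = 0) :
    ∑ v, g v = g (Sum.inl d) := by
  rw [sum_V, Finset.sum_eq_zero fun k _ => h2 k, add_zero]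
  fin_cases c <;> fin_cases d <;> simp_all

end Helpers

open Finset

variable {F : Type} [Field F] {n : ℕ}

lemma mem_allowed {q : ℕ} {f : (Fin q → Fin 2 ⊕ Fin n) → F}
    (h : f ∈ allowedSubmodule F (Fin 2 ⊕ Fin n) (uplinkArc n) q) :
    ∀ x, ¬ IsAllowed (uplinkArc n) x → f x = 0 := h

lemma key4 {f : (Fin 4 → Fin 2 ⊕ Fin n) → F}
    (hf1 : f ∈ allowedSubmodule F (Fin 2 ⊕ Fin n) (uplinkArc n) 4)
    (hf2 : pathBoundary F (Fin 2 ⊕ Fin n) 3 f ∈ allowedSubmodule F (Fin 2 ⊕ Fin n) (uplinkArc n) 3)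
    (c d : Fin 2) (hcd : c ≠ d) (t : Fin 2 ⊕ Fin n) :
    f ![Sum.inl c, Sum.inl d, Sum.inl c, t] = 0 := by
  have hb : pathBoundary F (Fin 2 ⊕ Fin n) 3 f ![Sum.inl c, Sum.inl c, t] = 0 :=
    mem_allowed hf2 _ (by simp [isAllowed_three_iff, uplinkArc])
  rw [boundary_apply, Fin.sum_univ_four] at hb
  simp only [ins0₃, ins1₃, ins2₃, ins3₃] at hb
  have e0 : ∑ v : Fin 2 ⊕ Fin n, f ![v, Sum.inl c, Sum.inl c, t] = 0 :=
    Finset.sum_eq_zero fun v _ => mem_allowed hf1 _ (by simp [isAllowed_four_iff, uplinkArc])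
  have e2 : ∑ v : Fin 2 ⊕ Fin n, f ![Sum.inl c, Sum.inl c, v, t] = 0 :=
    Finset.sum_eq_zero fun v _ => mem_allowed hf1 _ (by simp [isAllowed_four_iff, uplinkArc])
  have e3 : ∑ v : Fin 2 ⊕ Fin n, f ![Sum.inl c, Sum.inl c, t, v] = 0 :=
    Finset.sum_eq_zero fun v _ => mem_allowed hf1 _ (by simp [isAllowed_four_iff, uplinkArc])
  have e1 : ∑ v : Fin 2 ⊕ Fin n, f ![Sum.inl c, v, Sum.inl c, t]
      = f ![Sum.inl c, Sum.inl d, Sum.inl c, t] :=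
    sum_V_eq_single c d hcd _ (mem_allowed hf1 _ (by simp [isAllowed_four_iff, uplinkArc]))
      (fun k => mem_allowed hf1 _ (by simp [isAllowed_four_iff, uplinkArc]))
  rw [e0, e1, e2, e3] at hb
  simpa using hb

lemma classify4 {w : Fin 4 → Fin 2 ⊕ Fin n} (hw : IsAllowed (uplinkArc n) w) :
    ∃ c d : Fin 2, c ≠ d ∧ w 0 = Sum.inl c ∧ w 1 = Sum.inl d ∧ w 2 = Sum.inl c := by
  rw [isAllowed_four_iff] at hw
  obtain ⟨h01, h12, h23⟩ := hw
  rcases hw0 : w 0 with c | k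
  swap
  · rw [hw0] at h01; exact absurd h01 (fun h => h)
  rcases hw1 : w 1 with d | k
  swap
  · rw [hw1] at h12; exact absurd h12 (fun h => h)
  rcases hw2 : w 2 with e | k
  swap
  · rw [hw2] at h23; exact absurd h23 (fun h => h)
  rw [hw0, hw1] at h01
  rw [hw1, hw2] at h12
  have hcd : c ≠ d := h01
  have hde : d ≠ e := h12
  have hec : e = c := by fin_cases c <;> fin_cases d <;> fin_cases e <;> simp_all
  exact ⟨c, d, hcd, rfl, rfl, by rw [hec]⟩

lemma omega3_eq_bot :
    invariantPaths F (Fin 2 ⊕ Fin n) (uplinkArc n) 3 = ⊥ := by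
  rw [eq_bot_iff]
  intro f hf
  rw [invariantPaths, Submodule.mem_inf] at hf
  obtain ⟨hf1, hf2'⟩ := hf
  rw [Submodule.mem_comap] at hf2'
  simp only [Submodule.mem_bot]
  funext x
  show f x = 0
  by_cases hx : IsAllowed (uplinkArc n) x
  · obtain ⟨c, d, hcd, hw0, hw1, hw2⟩ := classify4 hx
    have hxeq : x = ![Sum.inl c, Sum.inl d, Sum.inl c, x 3] :=
      fin4_fun_eq.mpr ⟨hw0, hw1, hw2, rfl⟩
    rw [hxeq]
    exact key4 hf1 hf2' c d hcd _
  · exact mem_allowed hf1 x hx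

lemma boundaries_two_eq_bot :
    pathBoundaries F (Fin 2 ⊕ Fin n) (uplinkArc n) 2 = ⊥ := by
  rw [pathBoundaries, omega3_eq_bot, Submodule.map_bot]

open Finset

@[simp] lemma fin2_01 : (0 : Fin 2) ≠ 1 := by decide
@[simp] lemma fin2_10 : (1 : Fin 2) ≠ 0 := by decide

noncomputable def PhiL (F : Type) [Field F] (n : ℕ) :
    (Fin n → F) →ₗ[F] ((Fin 3 → Fin 2 ⊕ Fin n) → F) where
  toFun x := fun w => ∑ i : Fin n, x i *
    ((if w = ![Sum.inl 0, Sum.inl 1, Sum.inr i] then 1 else 0) +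
     (if w = ![Sum.inl 1, Sum.inl 0, Sum.inr i] then 1 else 0))
  map_add' x y := by funext w; simp [add_mul, Finset.sum_add_distrib]
  map_smul' c x := by funext w; simp [Finset.mul_sum, mul_assoc]

variable {F : Type} [Field F] {n : ℕ}

lemma PhiL_apply (x : Fin n → F) (w : Fin 3 → Fin 2 ⊕ Fin n) :
    PhiL F n x w = ∑ i : Fin n, x i *
    ((if w = ![Sum.inl 0, Sum.inl 1, Sum.inr i] then 1 else 0) +
     (if w = ![Sum.inl 1, Sum.inl 0, Sum.inr i] then 1 else 0)) := rfl

lemma PhiL_ab (x : Fin n → F) (i : Fin n) :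
    PhiL F n x ![Sum.inl 0, Sum.inl 1, Sum.inr i] = x i := by
  rw [PhiL_apply, Finset.sum_eq_single i]
  · simp [fin3_fun_eq]
  · intro i' _ hne
    simp [fin3_fun_eq, (Ne.symm hne : i ≠ i')]
  · intro h; exact absurd (Finset.mem_univ i) h

lemma PhiL_ba (x : Fin n → F) (i : Fin n) :
    PhiL F n x ![Sum.inl 1, Sum.inl 0, Sum.inr i] = x i := by
  rw [PhiL_apply, Finset.sum_eq_single i]
  · simp [fin3_fun_eq]
  · intro i' _ hne
    simp [fin3_fun_eq, (Ne.symm hne : i ≠ i')]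
  · intro h; exact absurd (Finset.mem_univ i) h

lemma PhiL_other (x : Fin n → F) {w : Fin 3 → Fin 2 ⊕ Fin n}
    (hw : ∀ i : Fin n, w ≠ ![Sum.inl 0, Sum.inl 1, Sum.inr i] ∧
      w ≠ ![Sum.inl 1, Sum.inl 0, Sum.inr i]) :
    PhiL F n x w = 0 := by
  rw [PhiL_apply]
  exact Finset.sum_eq_zero fun i _ => by simp [(hw i).1, (hw i).2]

lemma allowed_abi (i : Fin n) :
    IsAllowed (uplinkArc n) ![Sum.inl 0, Sum.inl 1, Sum.inr i] := by
  simp [isAllowed_three_iff, uplinkArc]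

lemma allowed_bai (i : Fin n) :
    IsAllowed (uplinkArc n) ![Sum.inl 1, Sum.inl 0, Sum.inr i] := by
  simp [isAllowed_three_iff, uplinkArc]

lemma PhiL_support (x : Fin n → F) :
    PhiL F n x ∈ allowedSubmodule F (Fin 2 ⊕ Fin n) (uplinkArc n) 3 :=
  fun _ hw => PhiL_other x fun i =>
    ⟨fun h => hw (h ▸ allowed_abi i), fun h => hw (h ▸ allowed_bai i)⟩

lemma dPhi (x : Fin n → F) (hx : ∑ i, x i = 0) :
    pathBoundary F (Fin 2 ⊕ Fin n) 2 (PhiL F n x) = 0 := by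
  have hdec : PhiL F n x = ∑ i : Fin n, x i •
      ((Pi.single ![Sum.inl 0, Sum.inl 1, Sum.inr i] (1 : F) :
          (Fin 3 → Fin 2 ⊕ Fin n) → F) +
        Pi.single ![Sum.inl 1, Sum.inl 0, Sum.inr i] 1) := by
    funext w
    rw [Finset.sum_apply, PhiL_apply]
    refine Finset.sum_congr rfl fun i _ => ?_
    simp [Pi.single_apply, mul_add]
  have hsingle : ∀ i : Fin n,
      pathBoundary F (Fin 2 ⊕ Fin n) 2
        ((Pi.single ![Sum.inl 0, Sum.inl 1, Sum.inr i] (1 : F) :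
            (Fin 3 → Fin 2 ⊕ Fin n) → F) +
          Pi.single ![Sum.inl 1, Sum.inl 0, Sum.inr i] 1)
      = (Pi.single ![Sum.inl 0, Sum.inl 1] (1 : F) :
            (Fin 2 → Fin 2 ⊕ Fin n) → F) +
          Pi.single ![Sum.inl 1, Sum.inl 0] 1 := by
    intro i
    funext w
    rw [map_add, Pi.add_apply, boundary_single, boundary_single,
      Fin.sum_univ_three, Fin.sum_univ_three]
    simp only [drop0₃, drop1₃, drop2₃]
    rw [Pi.add_apply, Pi.single_apply, Pi.single_apply]
    norm_num
    split_ifs <;> norm_num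
  rw [hdec, map_sum]
  simp_rw [map_smul, hsingle]
  rw [← Finset.sum_smul, hx, zero_smul]

lemma pathCycles_two_def :
    pathCycles F (Fin 2 ⊕ Fin n) (uplinkArc n) 2 =
      invariantPaths F (Fin 2 ⊕ Fin n) (uplinkArc n) 2 ⊓
        LinearMap.ker (pathBoundary F (Fin 2 ⊕ Fin n) 2) := rfl

lemma PhiL_mem (x : Fin n → F) (hx : ∑ i, x i = 0) :
    PhiL F n x ∈ pathCycles F (Fin 2 ⊕ Fin n) (uplinkArc n) 2 := by
  rw [pathCycles_two_def, Submodule.mem_inf]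
  refine ⟨?_, ?_⟩
  · rw [invariantPaths, Submodule.mem_inf]
    refine ⟨PhiL_support x, ?_⟩
    rw [Submodule.mem_comap, dPhi x hx]
    exact Submodule.zero_mem _
  · rw [LinearMap.mem_ker]; exact dPhi x hx

open Finset Module

variable {F : Type} [Field F] {n : ℕ}

lemma Z2_props {f : (Fin 3 → Fin 2 ⊕ Fin n) → F}
    (hf : f ∈ pathCycles F (Fin 2 ⊕ Fin n) (uplinkArc n) 2) :
    (∀ x, ¬ IsAllowed (uplinkArc n) x → f x = 0) ∧
      pathBoundary F (Fin 2 ⊕ Fin n) 2 f = 0 := by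
  rw [pathCycles_two_def, Submodule.mem_inf] at hf
  obtain ⟨hf1, hf2⟩ := hf
  rw [invariantPaths, Submodule.mem_inf] at hf1
  exact ⟨hf1.1, LinearMap.mem_ker.mp hf2⟩

section Facts
variable {f : (Fin 3 → Fin 2 ⊕ Fin n) → F}
  (hall : ∀ x, ¬ IsAllowed (uplinkArc n) x → f x = 0)
  (hker : pathBoundary F (Fin 2 ⊕ Fin n) 2 f = 0)

include hall hker

lemma Z2_ba_eq_ab (i : Fin n) :
    f ![Sum.inl 1, Sum.inl 0, Sum.inr i] = f ![Sum.inl 0, Sum.inl 1, Sum.inr i] := by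
  have h : pathBoundary F (Fin 2 ⊕ Fin n) 2 f ![Sum.inl 1, Sum.inr i] = 0 := by rw [hker]; rfl
  rw [boundary_apply, Fin.sum_univ_three] at h
  simp only [ins0₂, ins1₂, ins2₂] at h
  have e0 : ∑ v : Fin 2 ⊕ Fin n, f ![v, Sum.inl 1, Sum.inr i]
      = f ![Sum.inl 0, Sum.inl 1, Sum.inr i] :=
    sum_V_eq_single 1 0 (by decide) _ (hall _ (by simp [isAllowed_three_iff, uplinkArc]))
      (fun k => hall _ (by simp [isAllowed_three_iff, uplinkArc]))
  have e1 : ∑ v : Fin 2 ⊕ Fin n, f ![Sum.inl 1, v, Sum.inr i]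
      = f ![Sum.inl 1, Sum.inl 0, Sum.inr i] :=
    sum_V_eq_single 1 0 (by decide) _ (hall _ (by simp [isAllowed_three_iff, uplinkArc]))
      (fun k => hall _ (by simp [isAllowed_three_iff, uplinkArc]))
  have e2 : ∑ v : Fin 2 ⊕ Fin n, f ![Sum.inl 1, Sum.inr i, v] = 0 :=
    Finset.sum_eq_zero fun v _ => hall _ (by simp [isAllowed_three_iff, uplinkArc])
  rw [e0, e1, e2] at h
  norm_num at h
  linear_combination -h

lemma Z2_aba_eq_zero : f ![Sum.inl 0, Sum.inl 1, Sum.inl 0] = 0 := by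
  have h : pathBoundary F (Fin 2 ⊕ Fin n) 2 f ![Sum.inl 0, Sum.inl 0] = 0 := by rw [hker]; rfl
  rw [boundary_apply, Fin.sum_univ_three] at h
  simp only [ins0₂, ins1₂, ins2₂] at h
  have e0 : ∑ v : Fin 2 ⊕ Fin n, f ![v, Sum.inl 0, Sum.inl 0] = 0 :=
    Finset.sum_eq_zero fun v _ => hall _ (by simp [isAllowed_three_iff, uplinkArc])
  have e1 : ∑ v : Fin 2 ⊕ Fin n, f ![Sum.inl 0, v, Sum.inl 0]
      = f ![Sum.inl 0, Sum.inl 1, Sum.inl 0] :=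
    sum_V_eq_single 0 1 (by decide) _ (hall _ (by simp [isAllowed_three_iff, uplinkArc]))
      (fun k => hall _ (by simp [isAllowed_three_iff, uplinkArc]))
  have e2 : ∑ v : Fin 2 ⊕ Fin n, f ![Sum.inl 0, Sum.inl 0, v] = 0 :=
    Finset.sum_eq_zero fun v _ => hall _ (by simp [isAllowed_three_iff, uplinkArc])
  rw [e0, e1, e2] at h
  norm_num at h
  exact h

lemma Z2_bab_eq_zero : f ![Sum.inl 1, Sum.inl 0, Sum.inl 1] = 0 := by
  have h : pathBoundary F (Fin 2 ⊕ Fin n) 2 f ![Sum.inl 1, Sum.inl 1] = 0 := by rw [hker]; rfl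
  rw [boundary_apply, Fin.sum_univ_three] at h
  simp only [ins0₂, ins1₂, ins2₂] at h
  have e0 : ∑ v : Fin 2 ⊕ Fin n, f ![v, Sum.inl 1, Sum.inl 1] = 0 :=
    Finset.sum_eq_zero fun v _ => hall _ (by simp [isAllowed_three_iff, uplinkArc])
  have e1 : ∑ v : Fin 2 ⊕ Fin n, f ![Sum.inl 1, v, Sum.inl 1]
      = f ![Sum.inl 1, Sum.inl 0, Sum.inl 1] :=
    sum_V_eq_single 1 0 (by decide) _ (hall _ (by simp [isAllowed_three_iff, uplinkArc]))
      (fun k => hall _ (by simp [isAllowed_three_iff, uplinkArc]))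
  have e2 : ∑ v : Fin 2 ⊕ Fin n, f ![Sum.inl 1, Sum.inl 1, v] = 0 :=
    Finset.sum_eq_zero fun v _ => hall _ (by simp [isAllowed_three_iff, uplinkArc])
  rw [e0, e1, e2] at h
  norm_num at h
  exact h

lemma Z2_sum_eq_zero : ∑ i : Fin n, f ![Sum.inl 0, Sum.inl 1, Sum.inr i] = 0 := by
  have h : pathBoundary F (Fin 2 ⊕ Fin n) 2 f ![Sum.inl 0, Sum.inl 1] = 0 := by rw [hker]; rfl
  rw [boundary_apply, Fin.sum_univ_three] at h
  simp only [ins0₂, ins1₂, ins2₂] at h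
  have e0 : ∑ v : Fin 2 ⊕ Fin n, f ![v, Sum.inl 0, Sum.inl 1]
      = f ![Sum.inl 1, Sum.inl 0, Sum.inl 1] :=
    sum_V_eq_single 0 1 (by decide) _ (hall _ (by simp [isAllowed_three_iff, uplinkArc]))
      (fun k => hall _ (by simp [isAllowed_three_iff, uplinkArc]))
  have e1 : ∑ v : Fin 2 ⊕ Fin n, f ![Sum.inl 0, v, Sum.inl 1] = 0 := by
    refine Finset.sum_eq_zero fun v _ => hall _ ?_
    rcases v with c | k
    · fin_cases c <;> simp [isAllowed_three_iff, uplinkArc]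
    · simp [isAllowed_three_iff, uplinkArc]
  rw [e0, e1, Z2_bab_eq_zero hall hker] at h
  rw [sum_V (g := fun v => f ![Sum.inl 0, Sum.inl 1, v])] at h
  rw [Z2_aba_eq_zero hall hker,
    hall ![Sum.inl 0, Sum.inl 1, Sum.inl 1] (by simp [isAllowed_three_iff, uplinkArc])] at h
  norm_num at h
  exact h

end Facts

lemma classify3 {w : Fin 3 → Fin 2 ⊕ Fin n} (hw : IsAllowed (uplinkArc n) w) :
    w = ![Sum.inl 0, Sum.inl 1, Sum.inl 0] ∨ w = ![Sum.inl 1, Sum.inl 0, Sum.inl 1] ∨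
    (∃ i, w = ![Sum.inl 0, Sum.inl 1, Sum.inr i]) ∨
    (∃ i, w = ![Sum.inl 1, Sum.inl 0, Sum.inr i]) := by
  rw [isAllowed_three_iff] at hw
  obtain ⟨h01, h12⟩ := hw
  rcases hw0 : w 0 with c | k
  swap
  · rw [hw0] at h01; exact absurd h01 (fun h => h)
  rcases hw1 : w 1 with d | k
  swap
  · rw [hw1] at h12; exact absurd h12 (fun h => h)
  rw [hw0, hw1] at h01
  have hcd : c ≠ d := h01
  rcases hw2 : w 2 with e | k
  · rw [hw1, hw2] at h12
    have hde : d ≠ e := h12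
    fin_cases c <;> fin_cases d <;> fin_cases e <;> simp_all [fin3_fun_eq]
  · fin_cases c <;> fin_cases d <;> simp_all [fin3_fun_eq]

open Finset Module

noncomputable def sumL (F : Type) [Field F] (n : ℕ) : (Fin n → F) →ₗ[F] F where
  toFun x := ∑ i, x i
  map_add' x y := by simp [Finset.sum_add_distrib]
  map_smul' c x := by simp [Finset.mul_sum]

variable {F : Type} [Field F] {n : ℕ}

noncomputable def Psi (F : Type) [Field F] (n : ℕ) :
    ↥(LinearMap.ker (sumL F n)) →ₗ[F]
      ↥(pathCycles F (Fin 2 ⊕ Fin n) (uplinkArc n) 2) :=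
  LinearMap.codRestrict _ ((PhiL F n).comp (Submodule.subtype _))
    (fun c => PhiL_mem c.1 (LinearMap.mem_ker.mp c.2))

lemma Psi_inj : Function.Injective (Psi F n) := by
  intro x y hxy
  apply Subtype.ext
  funext i
  have h := congrArg (fun g : ↥(pathCycles F (Fin 2 ⊕ Fin n) (uplinkArc n) 2) =>
    (g : (Fin 3 → Fin 2 ⊕ Fin n) → F) ![Sum.inl 0, Sum.inl 1, Sum.inr i]) hxy
  have h' : PhiL F n x.1 ![Sum.inl 0, Sum.inl 1, Sum.inr i] =
      PhiL F n y.1 ![Sum.inl 0, Sum.inl 1, Sum.inr i] := h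
  simpa [PhiL_ab] using h'

lemma Psi_surj : Function.Surjective (Psi F n) := by
  rintro ⟨f, hf⟩
  obtain ⟨hall, hker⟩ := Z2_props hf
  have hx : ∑ i, f ![Sum.inl 0, Sum.inl 1, Sum.inr i] = 0 := Z2_sum_eq_zero hall hker
  refine ⟨⟨fun i => f ![Sum.inl 0, Sum.inl 1, Sum.inr i], LinearMap.mem_ker.mpr hx⟩, ?_⟩
  apply Subtype.ext
  show PhiL F n (fun i => f ![Sum.inl 0, Sum.inl 1, Sum.inr i]) = f
  funext w
  by_cases hwall : IsAllowed (uplinkArc n) w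
  · rcases classify3 hwall with h | h | ⟨i, h⟩ | ⟨i, h⟩ <;> subst h
    · rw [PhiL_other _ fun i => by constructor <;> (intro hEq; simp [fin3_fun_eq] at hEq),
        Z2_aba_eq_zero hall hker]
    · rw [PhiL_other _ fun i => by constructor <;> (intro hEq; simp [fin3_fun_eq] at hEq),
        Z2_bab_eq_zero hall hker]
    · rw [PhiL_ab]
    · rw [PhiL_ba]
      exact (Z2_ba_eq_ab hall hker i).symm
  · rw [hall w hwall, PhiL_other]
    intro i
    exact ⟨fun h => hwall (h ▸ allowed_abi i), fun h => hwall (h ▸ allowed_bai i)⟩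

lemma finrank_Z2 (hn : 1 ≤ n) :
    finrank F ↥(pathCycles F (Fin 2 ⊕ Fin n) (uplinkArc n) 2) = n - 1 := by
  have e := LinearEquiv.ofBijective (Psi F n) ⟨Psi_inj, Psi_surj⟩
  rw [← e.finrank_eq]
  have hsur : LinearMap.range (sumL F n) = ⊤ := by
    rw [LinearMap.range_eq_top]
    intro y
    refine ⟨Pi.single ⟨0, hn⟩ y, ?_⟩
    show ∑ i, Pi.single (⟨0, hn⟩ : Fin n) y i = y
    simp [Pi.single_apply]
  have h := LinearMap.finrank_range_add_finrank_ker (sumL F n)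
  rw [hsur, finrank_top, Module.finrank_self, Module.finrank_fin_fun] at h
  omega

theorem uplinked_dyad_tildeBetti_two (F : Type) [Field F] (n : ℕ) (hn : 1 ≤ n) :
    tildeBetti F (Fin 2 ⊕ Fin n) (uplinkArc n) 2 = (n : ℤ) - 1 := by
  have hcomap : (pathBoundaries F (Fin 2 ⊕ Fin n) (uplinkArc n) 2).comap
      (pathCycles F (Fin 2 ⊕ Fin n) (uplinkArc n) 2).subtype = ⊥ := by
    rw [boundaries_two_eq_bot, Submodule.comap_bot, Submodule.ker_subtype]
  have hbetti : betti F (Fin 2 ⊕ Fin n) (uplinkArc n) 2 = n - 1 := by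
    unfold betti
    rw [(Submodule.quotEquivOfEqBot _ hcomap).finrank_eq]
    exact finrank_Z2 hn
  unfold tildeBetti
  rw [hbetti]
  norm_num
  omega
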